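/- Let λ < 0, μ > 0, δ₀ ≥ 0, ε₀ > √δ₀ > 0, A, B > 0, and define E(t) = min{ −√δ₀/|λ| + ε₀ e^{|λ|t}, A√δ₀ + B e^{−μ t} } for t ≥ 0. If t₀ ≥ 0 satisfies −√δ₀/|λ| + ε₀ e^{|λ| t₀} = A√δ₀ + B e^{−μ t₀}, then t₀ > log(B/ε₀)/(|λ| + μ) and sup_{t ≥ 0} E(t) ≤ A√δ₀ + B^{|λ|/(|λ|+μ)} ε₀^{μ/(|λ|+μ)}. -/

import Mathlib

theorem stmt5 (lam μ δ₀ ε₀ A B t₀ : ℝ) (hlam : lam < 0) (hμ : 0 < μ)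
    (hδ₀ : 0 < Real.sqrt δ₀) (hε₀ : Real.sqrt δ₀ < ε₀)
    (hA : 0 < A) (hB : 0 < B) (ht₀ : 0 ≤ t₀)
    (hcross : -Real.sqrt δ₀ / |lam| + ε₀ * Real.exp (|lam| * t₀) =
      A * Real.sqrt δ₀ + B * Real.exp (-μ * t₀)) :
    Real.log (B / ε₀) / (|lam| + μ) < t₀ ∧
    ∀ t : ℝ, 0 ≤ t →
      min (-Real.sqrt δ₀ / |lam| + ε₀ * Real.exp (|lam| * t))
          (A * Real.sqrt δ₀ + B * Real.exp (-μ * t)) ≤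
        A * Real.sqrt δ₀ + B ^ (|lam| / (|lam| + μ)) * ε₀ ^ (μ / (|lam| + μ)) := by
  have hL : 0 < |lam| := abs_pos.mpr (ne_of_lt hlam)
  have hε : 0 < ε₀ := hδ₀.trans hε₀
  have hS : 0 < |lam| + μ := by positivity
  have hdiv : 0 < Real.sqrt δ₀ / |lam| := div_pos hδ₀ hL
  have h1 : B * Real.exp (-μ * t₀) < ε₀ * Real.exp (|lam| * t₀) := by
    rw [neg_div] at hcross
    nlinarith [mul_pos hA hδ₀]
  have h2 : Real.log (B / ε₀) < (|lam| + μ) * t₀ := by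
    have hlt : B / ε₀ < Real.exp ((|lam| + μ) * t₀) := by
      rw [div_lt_iff₀ hε]
      have := mul_lt_mul_of_pos_right h1 (Real.exp_pos (μ * t₀))
      calc B = B * Real.exp (-μ * t₀) * Real.exp (μ * t₀) := by
              rw [mul_assoc, ← Real.exp_add]; simp
        _ < ε₀ * Real.exp (|lam| * t₀) * Real.exp (μ * t₀) := this
        _ = Real.exp ((|lam| + μ) * t₀) * ε₀ := by
              rw [mul_assoc, ← Real.exp_add]; ring_nf
    calc Real.log (B / ε₀) < Real.log (Real.exp ((|lam| + μ) * t₀)) :=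
          Real.log_lt_log (by positivity) hlt
      _ = (|lam| + μ) * t₀ := Real.log_exp _
  have hfirst : Real.log (B / ε₀) / (|lam| + μ) < t₀ := by
    rw [div_lt_iff₀ hS]; linarith
  refine ⟨hfirst, fun t ht => ?_⟩
  set b : ℝ := μ / (|lam| + μ) with hb
  have hkey : B * Real.exp (-μ * t₀) ≤ B ^ (|lam| / (|lam| + μ)) * ε₀ ^ b := by
    have hexp : Real.exp (-μ * t₀) ≤ (ε₀ / B) ^ b := by
      have h3 : -μ * t₀ ≤ b * Real.log (ε₀ / B) := by
        have : Real.log (ε₀ / B) = - Real.log (B / ε₀) := by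
          rw [← Real.log_inv, inv_div]
        rw [this, hb, div_mul_eq_mul_div, le_div_iff₀ hS]
        nlinarith [h2, hμ.le]
      calc Real.exp (-μ * t₀) ≤ Real.exp (Real.log (ε₀ / B) * b) := by
            rw [mul_comm (Real.log (ε₀ / B)) b]; exact Real.exp_le_exp.mpr h3
        _ = (ε₀ / B) ^ b := (Real.rpow_def_of_pos (by positivity) b).symm
    have hdivpow : (ε₀ / B) ^ b = ε₀ ^ b / B ^ b :=
      Real.div_rpow (le_of_lt hε) (le_of_lt hB) b
    have hone : |lam| / (|lam| + μ) = 1 - b := by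
      rw [hb]; field_simp; ring
    calc B * Real.exp (-μ * t₀) ≤ B * (ε₀ ^ b / B ^ b) := by
          rw [← hdivpow]; exact mul_le_mul_of_nonneg_left hexp (le_of_lt hB)
      _ = B ^ (1 - b) * ε₀ ^ b := by
          rw [Real.rpow_sub hB, Real.rpow_one]; ring
      _ = B ^ (|lam| / (|lam| + μ)) * ε₀ ^ b := by rw [hone]
  rcases le_total t t₀ with h | h
  · refine le_trans (min_le_left _ _) ?_
    have hmono : ε₀ * Real.exp (|lam| * t) ≤ ε₀ * Real.exp (|lam| * t₀) :=
      mul_le_mul_of_nonneg_left (Real.exp_le_exp.mpr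
        (mul_le_mul_of_nonneg_left h (le_of_lt hL))) (le_of_lt hε)
    linarith
  · refine le_trans (min_le_right _ _) ?_
    have hmono : B * Real.exp (-μ * t) ≤ B * Real.exp (-μ * t₀) := by
      apply mul_le_mul_of_nonneg_left _ (le_of_lt hB)
      exact Real.exp_le_exp.mpr (by nlinarith)
    linarith
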